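/- Success probability of the quantum strategy for the Parity Bending Problem: fix n ≥ 1 and m : ℕ, let ω = exp(2π·i·m/3) ∈ ℂ, and define ψ : (Fin n → Bool) → ℂ by ψ(all-false) = 1/√2, ψ(all-true) = ω/√2, and ψ(v) = 0 otherwise. Let H_n be the n-qubit Hadamard transform, (H_n ψ)(y) = 2^{−n/2}·∑_{v} (−1)^{⟨v,y⟩}·ψ(v), where ⟨v,y⟩ counts the indices i with v_i = y_i = true. Then: if m ≡ 0 (mod 3), the sum of |(H_n ψ)(y)|² over all y of even Hamming weight equals 1; and if m ≢ 0 (mod 3), the sum of |(H_n ψ)(y)|² over all y of odd Hamming weight equals 3/4. -/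

import Mathlib

/-- Hamming weight of a Boolean string. -/
def hamming {n : ℕ} (x : Fin n → Bool) : ℕ :=
  (Finset.univ.filter fun i => x i = true).card

/-- `inn u v` is the number of indices `i` with `u i = v i = true`. -/
def inn {n : ℕ} (u v : Fin n → Bool) : ℕ :=
  (Finset.univ.filter fun i => u i = true ∧ v i = true).card

/-- The state `( |0^n⟩ + ω |1^n⟩ )/√2` with `ω = exp(2πi·m/3)`, i.e. the cat state after
the controlled-phase layer of the Parity Bending circuit on an input of Hamming weight `m`. -/
noncomputable def pbpState (n m : ℕ) : (Fin n → Bool) → ℂ :=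
  fun v =>
    if v = (fun _ => false) then 1 / (Real.sqrt 2 : ℂ)
    else if v = (fun _ => true) then
      Complex.exp (2 * (Real.pi : ℂ) * Complex.I * (m : ℂ) / 3) / (Real.sqrt 2 : ℂ)
    else 0

/-- The `n`-qubit Hadamard transform: `(H_n ψ)(y) = 2^{−n/2} ∑_v (−1)^{⟨v,y⟩} ψ(v)`. -/
noncomputable def hadamardTransform (n : ℕ) (ψ : (Fin n → Bool) → ℂ)
    (y : Fin n → Bool) : ℂ :=
  ((Real.sqrt 2 : ℂ) ^ n)⁻¹ * ∑ v, (-1 : ℂ) ^ inn v y * ψ v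

/-! ### Auxiliary definitions and lemmas -/

/-- The phase `ω = exp(2πi·m/3)`. -/
noncomputable def pbpOmega (m : ℕ) : ℂ :=
  Complex.exp (2 * (Real.pi : ℂ) * Complex.I * (m : ℂ) / 3)

lemma pbp_inn_false {n : ℕ} (y : Fin n → Bool) : inn (fun _ => false) y = 0 := by
  simp [inn]

lemma pbp_inn_true {n : ℕ} (y : Fin n → Bool) : inn (fun _ => true) y = hamming y := by
  simp [inn, hamming]

lemma pbp_split {n : ℕ} (m : ℕ) (hn : 1 ≤ n) (v : Fin n → Bool) :
    pbpState n m v =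
      (if v = (fun _ => false) then 1 / (Real.sqrt 2 : ℂ) else 0) +
      (if v = (fun _ => true) then pbpOmega m / (Real.sqrt 2 : ℂ) else 0) := by
  have hne : (fun _ => false : Fin n → Bool) ≠ (fun _ => true) := by
    intro h; exact absurd (congrFun h ⟨0, hn⟩) (by simp)
  unfold pbpState pbpOmega
  split_ifs with h1 h2 <;> simp_all

lemma pbp_hadamard_eval {n m : ℕ} (hn : 1 ≤ n) (y : Fin n → Bool) :
    hadamardTransform n (pbpState n m) y =
      ((Real.sqrt 2 : ℂ) ^ n)⁻¹ *
        ((1 + (-1 : ℂ) ^ hamming y * pbpOmega m) / (Real.sqrt 2 : ℂ)) := by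
  unfold hadamardTransform
  congr 1
  rw [Finset.sum_congr rfl (fun v _ => by rw [pbp_split m hn v])]
  simp only [mul_add, Finset.sum_add_distrib, mul_ite, mul_zero, Finset.sum_ite_eq',
    Finset.mem_univ, if_true, pbp_inn_false, pbp_inn_true, pow_zero, one_mul]
  ring

lemma pbp_omega_one {m : ℕ} (h : m % 3 = 0) : pbpOmega m = 1 := by
  obtain ⟨k, hk⟩ : 3 ∣ m := Nat.dvd_of_mod_eq_zero h
  have : 2 * (Real.pi : ℂ) * Complex.I * (m : ℂ) / 3 = (k : ℤ) * (2 * Real.pi * Complex.I) := by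
    push_cast [hk]; ring
  rw [pbpOmega, this, Complex.exp_int_mul_two_pi_mul_I]

lemma pbp_omega_cube (m : ℕ) : pbpOmega m ^ 3 = 1 := by
  rw [pbpOmega, ← Complex.exp_nat_mul]
  have : ((3 : ℕ) : ℂ) * (2 * (Real.pi : ℂ) * Complex.I * (m : ℂ) / 3)
      = (m : ℤ) * (2 * Real.pi * Complex.I) := by push_cast; ring
  rw [this, Complex.exp_int_mul_two_pi_mul_I]

lemma pbp_omega_ne_one {m : ℕ} (h : m % 3 ≠ 0) : pbpOmega m ≠ 1 := by
  intro he
  rw [pbpOmega, Complex.exp_eq_one_iff] at he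
  obtain ⟨k, hk⟩ := he
  have hpi : (Real.pi : ℂ) ≠ 0 := by exact_mod_cast Real.pi_ne_zero
  have h2 : (2 * (Real.pi : ℂ) * Complex.I) * ((m : ℂ) - 3 * k) = 0 := by
    linear_combination 3 * hk
  have hmc : (m : ℂ) - 3 * k = 0 :=
    (mul_eq_zero.mp h2).resolve_left
      (mul_ne_zero (mul_ne_zero two_ne_zero hpi) Complex.I_ne_zero)
  have hm : (m : ℤ) = 3 * k := by
    have : (m : ℂ) = 3 * k := by linear_combination hmc
    exact_mod_cast this
  omega

lemma pbp_conj_omega (m : ℕ) : (starRingEnd ℂ) (pbpOmega m) = (pbpOmega m)⁻¹ := by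
  rw [pbpOmega, ← Complex.exp_conj, ← Complex.exp_neg]
  congr 1
  simp [Complex.conj_I, map_ofNat]
  ring

lemma pbp_normSq_one_sub {m : ℕ} (h : m % 3 ≠ 0) : Complex.normSq (1 - pbpOmega m) = 3 := by
  set w := pbpOmega m with hw
  have h3 : w ^ 3 = 1 := pbp_omega_cube m
  have hne : w ≠ 1 := pbp_omega_ne_one h
  have hq : w ^ 2 + w + 1 = 0 := by
    have h0 : (w - 1) * (w ^ 2 + w + 1) = 0 := by linear_combination h3
    exact (mul_eq_zero.mp h0).resolve_left (sub_ne_zero.mpr hne)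
  have hinv : w⁻¹ = w ^ 2 := inv_eq_of_mul_eq_one_right (by linear_combination h3)
  have key : ((Complex.normSq (1 - w) : ℝ) : ℂ) = 3 := by
    rw [← Complex.mul_conj, map_sub, map_one, pbp_conj_omega, hinv]
    linear_combination h3 - hq
  exact_mod_cast key

lemma pbp_hamming_split {n : ℕ} (y : Fin n → Bool) (i : Fin n) :
    hamming y = (if y i = true then 1 else 0) +
      ((Finset.univ.erase i).filter fun j => y j = true).card := by
  conv_lhs => rw [hamming, ← Finset.insert_erase (Finset.mem_univ i), Finset.filter_insert]
  split_ifs with h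
  · rw [Finset.card_insert_of_notMem
      (fun hc => (Finset.mem_erase.mp (Finset.mem_filter.mp hc).1).1 rfl)]
    omega
  · simp

lemma pbp_hamming_update {n : ℕ} (y : Fin n → Bool) (i : Fin n) :
    hamming (Function.update y i (! y i)) % 2 = (hamming y + 1) % 2 := by
  have h1 := pbp_hamming_split y i
  have h2 := pbp_hamming_split (Function.update y i (! y i)) i
  have hcard : ((Finset.univ.erase i).filter fun j => Function.update y i (! y i) j = true).card
      = ((Finset.univ.erase i).filter fun j => y j = true).card := by
    congr 1
    apply Finset.filter_congr
    intro j hj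
    rw [Function.update_of_ne (Finset.mem_erase.mp hj).1]
  rw [hcard, Function.update_self] at h2
  cases hyi : y i <;> simp [hyi] at h1 h2 ⊢ <;> omega

lemma pbp_card_parity {n : ℕ} (hn : 1 ≤ n) :
    (Finset.univ.filter fun y : Fin n → Bool => hamming y % 2 = 0).card = 2 ^ (n - 1) ∧
    (Finset.univ.filter fun y : Fin n → Bool => hamming y % 2 = 1).card = 2 ^ (n - 1) := by
  set i0 : Fin n := ⟨0, hn⟩
  have hmem : ∀ (a b : ℕ) (y : Fin n → Bool), hamming y % 2 = a → (a + 1) % 2 = b →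
      hamming (Function.update y i0 (! y i0)) % 2 = b := by
    intro a b y hy hab
    rw [pbp_hamming_update]; omega
  have hbij : (Finset.univ.filter fun y : Fin n → Bool => hamming y % 2 = 0).card
      = (Finset.univ.filter fun y : Fin n → Bool => hamming y % 2 = 1).card := by
    apply Finset.card_bij' (fun y _ => Function.update y i0 (! y i0))
      (fun y _ => Function.update y i0 (! y i0)) <;> intro y hy <;>
      simp only [Finset.mem_filter, Finset.mem_univ, true_and] at hy ⊢
    · simp [Function.update_self, Function.update_idem]
    · simp [Function.update_self, Function.update_idem]
    · exact hmem 0 1 y hy rfl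
    · exact hmem 1 0 y hy rfl
  have htot : (Finset.univ.filter fun y : Fin n → Bool => hamming y % 2 = 0).card
      + (Finset.univ.filter fun y : Fin n → Bool => hamming y % 2 = 1).card = 2 ^ n := by
    rw [show (Finset.univ.filter fun y : Fin n → Bool => hamming y % 2 = 1)
        = (Finset.univ.filter fun y : Fin n → Bool => ¬ (hamming y % 2 = 0)) from
      Finset.filter_congr (by intro y _; constructor <;> omega)]
    rw [Finset.card_filter_add_card_filter_not]
    simp [Finset.card_univ]
  have hp : 2 ^ n = 2 ^ (n - 1) * 2 := by
    rw [← pow_succ]; congr 1; omega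
  omega

lemma pbp_abs_sq {n m : ℕ} (hn : 1 ≤ n) (y : Fin n → Bool) :
    ‖hadamardTransform n (pbpState n m) y‖ ^ 2
      = Complex.normSq (1 + (-1 : ℂ) ^ hamming y * pbpOmega m) / ((2 : ℝ) ^ n * 2) := by
  have hs2 : Complex.normSq (Real.sqrt 2 : ℂ) = 2 := by
    rw [Complex.normSq_ofReal]; exact Real.mul_self_sqrt (by norm_num)
  rw [pbp_hadamard_eval hn y, Complex.sq_norm, map_mul, map_inv₀, map_pow, hs2,
    map_div₀, hs2]
  ring

/-- Success probability of the quantum strategy for the Parity Bending Problem: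
if `m ≡ 0 (mod 3)` the measured string has even Hamming weight with probability `1`, and
otherwise it has odd Hamming weight with probability exactly `3/4`. -/
theorem pbp_quantum_strategy (n m : ℕ) (hn : 1 ≤ n) :
    (m % 3 = 0 →
      ∑ y ∈ Finset.univ.filter (fun y : Fin n → Bool => hamming y % 2 = 0),
        ‖hadamardTransform n (pbpState n m) y‖ ^ 2 = 1) ∧
    (m % 3 ≠ 0 →
      ∑ y ∈ Finset.univ.filter (fun y : Fin n → Bool => hamming y % 2 = 1),
        ‖hadamardTransform n (pbpState n m) y‖ ^ 2 = 3 / 4) := by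
  have hpow : (2 : ℝ) ^ n = 2 ^ (n - 1) * 2 := by
    rw [← pow_succ]; congr 1; omega
  have hpos : (0 : ℝ) < 2 ^ (n - 1) := by positivity
  constructor
  · intro h
    have hterm : ∀ y ∈ Finset.univ.filter (fun y : Fin n → Bool => hamming y % 2 = 0),
        ‖hadamardTransform n (pbpState n m) y‖ ^ 2 = 4 / ((2 : ℝ) ^ n * 2) := by
      intro y hy
      simp only [Finset.mem_filter, Finset.mem_univ, true_and] at hy
      rw [pbp_abs_sq hn y, pbp_omega_one h, Even.neg_one_pow (Nat.even_iff.mpr hy)]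
      norm_num
    rw [Finset.sum_congr rfl hterm, Finset.sum_const, (pbp_card_parity hn).1,
      nsmul_eq_mul, hpow]
    push_cast
    field_simp
    ring
  · intro h
    have hterm : ∀ y ∈ Finset.univ.filter (fun y : Fin n → Bool => hamming y % 2 = 1),
        ‖hadamardTransform n (pbpState n m) y‖ ^ 2 = 3 / ((2 : ℝ) ^ n * 2) := by
      intro y hy
      simp only [Finset.mem_filter, Finset.mem_univ, true_and] at hy
      rw [pbp_abs_sq hn y, Odd.neg_one_pow (Nat.odd_iff.mpr hy)]
      rw [show (1 : ℂ) + (-1) * pbpOmega m = 1 - pbpOmega m by ring, pbp_normSq_one_sub h]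
    rw [Finset.sum_congr rfl hterm, Finset.sum_const, (pbp_card_parity hn).2,
      nsmul_eq_mul, hpow]
    push_cast
    field_simp
    ring
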